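/- arXiv:2212.05899 — 5 statements merged into one kernel-verified Lean document; each statement's English description precedes it below -/
import Mathlib

section
/- Let A be a commutative K-algebra with a ℤ-grading, char K = 0, and let δ be a locally nilpotent derivation of A. Write δ = δ_l + δ_{l+1} + ... + δ_k as a sum of homogeneous components with δ_l ≠ 0 the lowest component. Then δ_l is a locally nilpotent derivation. -/
open scoped BigOperators

/-- Let `A` be a `ℤ`-graded commutative `K`-algebra (`char K = 0`) and `δ` a locally
nilpotent derivation of `A`. Write `δ = δ_l + δ_{l+1} + ⋯ + δ_k` as a sum of homogeneous
components with `δ_l ≠ 0` the lowest component. Then `δ_l` is a locally nilpotent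
derivation. -/
theorem lowest_homogeneous_component_lnd (K : Type*) [Field K] [CharZero K]
    (A : Type*) [CommRing A] [Algebra K A]
    (𝒜 : ℤ → Submodule K A) [GradedAlgebra 𝒜]
    (δ : Derivation K A A)
    (hδ : ∀ f : A, ∃ m : ℕ, (δ.toLinearMap ^ m) f = 0)
    (l k : ℤ) (hlk : l ≤ k)
    (δc : ℤ → Derivation K A A)
    (hhom : ∀ (i : ℤ) (n : ℤ) (a : A), a ∈ 𝒜 n → δc i a ∈ 𝒜 (n + i))
    (hsum : ∀ a : A, δ a = ∑ i ∈ Finset.Icc l k, δc i a)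
    (hlow : δc l ≠ 0) :
    ∀ f : A, ∃ m : ℕ, ((δc l).toLinearMap ^ m) f = 0 := by
  classical
  -- `S d` : the submodule spanned by homogeneous parts of degree `> d`.
  set S : ℤ → Submodule K A := fun d => ⨆ j : {j : ℤ // d < j}, 𝒜 (j : ℤ) with hSdef
  have hmem : ∀ d j, d < j → 𝒜 j ≤ S d := by
    intro d j h
    exact le_iSup (fun j : {j : ℤ // d < j} => 𝒜 (j : ℤ)) ⟨j, h⟩
  -- elements of `𝒜 d ∩ S d` are zero
  have hzero : ∀ (d : ℤ) (x : A), x ∈ 𝒜 d → x ∈ S d → x = 0 := by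
    intro d x hx hxS
    have h2 : ∀ y : A, y ∈ S d → ((DirectSum.decompose 𝒜 y) d : A) = 0 := by
      intro y hy
      refine Submodule.iSup_induction (motive := fun y => ((DirectSum.decompose 𝒜 y) d : A) = 0)
        _ hy ?_ ?_ ?_
      · rintro ⟨j, hj⟩ z hz
        exact DirectSum.decompose_of_mem_ne 𝒜 hz (by exact ne_of_gt hj)
      · simp
      · intro a b ha hb
        rw [DirectSum.decompose_add]
        simp [ha, hb]
    have h1 : ((DirectSum.decompose 𝒜 x) d : A) = x := DirectSum.decompose_of_mem_same 𝒜 hx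
    rw [← h1, h2 x hxS]
  -- δ maps S d into S (d + l)
  have hA : ∀ (d : ℤ) (x : A), x ∈ S d → δ x ∈ S (d + l) := by
    intro d x hx
    refine Submodule.iSup_induction (motive := fun x => δ x ∈ S (d + l)) _ hx ?_ ?_ ?_
    · rintro ⟨j, hj⟩ z hz
      rw [hsum z]
      refine Submodule.sum_mem _ fun i hi => ?_
      have hi' := Finset.mem_Icc.mp hi
      exact hmem (d + l) (j + i) (by omega) (hhom i j z hz)
    · simp
    · intro a b ha hb
      rw [map_add]; exact Submodule.add_mem _ ha hb
  -- for homogeneous x of degree n, δ x - δc l x ∈ S (n + l)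
  have hB : ∀ (n : ℤ) (x : A), x ∈ 𝒜 n → δ x - δc l x ∈ S (n + l) := by
    intro n x hx
    have hl : l ∈ Finset.Icc l k := Finset.mem_Icc.mpr ⟨le_refl l, hlk⟩
    rw [hsum x, ← Finset.add_sum_erase _ _ hl, add_sub_cancel_left]
    refine Submodule.sum_mem _ fun i hi => ?_
    have hne : i ≠ l := (Finset.mem_erase.mp hi).1
    have hi' := Finset.mem_Icc.mp (Finset.mem_erase.mp hi).2
    exact hmem (n + l) (n + i) (by omega) (hhom i n x hx)
  -- main induction
  have key : ∀ (m : ℕ) (n : ℤ) (a : A), a ∈ 𝒜 n →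
      ((δc l).toLinearMap ^ m) a ∈ 𝒜 (n + m * l) ∧
      (δ.toLinearMap ^ m) a - ((δc l).toLinearMap ^ m) a ∈ S (n + m * l) := by
    intro m
    induction m with
    | zero =>
      intro n a ha
      simp only [pow_zero, Module.End.one_apply, Nat.cast_zero, zero_mul, add_zero, sub_self]
      exact ⟨ha, Submodule.zero_mem _⟩
    | succ m ih =>
      intro n a ha
      obtain ⟨h1, h2⟩ := ih n a ha
      have hdeg : n + ((m : ℤ) + 1) * l = (n + m * l) + l := by ring
      rw [pow_succ', pow_succ', Module.End.mul_apply, Module.End.mul_apply]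
      set b := ((δc l).toLinearMap ^ m) a with hb
      set c := (δ.toLinearMap ^ m) a with hc
      constructor
      · rw [Nat.cast_add, Nat.cast_one, hdeg]
        exact hhom l (n + m * l) b h1
      · have heq : δ.toLinearMap c - (δc l).toLinearMap b
            = δ (c - b) + (δ b - δc l b) := by
          simp only [Derivation.coeFn_coe, map_sub]
          ring
        rw [Nat.cast_add, Nat.cast_one, hdeg, heq]
        exact Submodule.add_mem _ (hA _ _ h2) (hB _ _ h1)
  -- homogeneous case
  have hhomog : ∀ (n : ℤ) (a : A), a ∈ 𝒜 n → ∃ m : ℕ, ((δc l).toLinearMap ^ m) a = 0 := by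
    intro n a ha
    obtain ⟨m, hm⟩ := hδ a
    obtain ⟨h1, h2⟩ := key m n a ha
    refine ⟨m, hzero _ _ h1 ?_⟩
    rw [hm, zero_sub] at h2
    simpa using Submodule.neg_mem _ h2
  -- general case
  intro f
  have hf := DirectSum.sum_support_decompose 𝒜 f
  set s := (DirectSum.decompose 𝒜 f).support with hs
  choose mo hmo using fun i : s => hhomog i ((DirectSum.decompose 𝒜 f i) : A) (SetLike.coe_mem _)
  refine ⟨s.attach.sup mo, ?_⟩
  rw [← hf, map_sum]
  refine Finset.sum_eq_zero fun i hi => ?_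
  have hle : mo ⟨i, hi⟩ ≤ s.attach.sup mo := Finset.le_sup (Finset.mem_attach _ _)
  obtain ⟨r, hr⟩ := Nat.exists_eq_add_of_le hle
  rw [hr, add_comm, pow_add, Module.End.mul_apply, hmo ⟨i, hi⟩, map_zero]
end

section
/- Let M = ℤⁿ and let σ ⊂ M_ℚ ⊗ be a pointed rational polyhedral cone with dual cone σ^∨. For a Demazure root e with distinguished ray ρ (with primitive generator p_ρ), the formula ∂_e(χ^m) = ⟨p_ρ, m⟩ χ^{e+m} defines a locally nilpotent derivation of the semigroup algebra K[σ^∨ ∩ M]. -/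
open scoped BigOperators
open Matrix

/-- The monoid of lattice points of the dual cone `σ^∨`: all `m ∈ M = ℤⁿ` pairing
nonnegatively with every ray generator of the cone `σ`. -/
def dualConeMonoid (n : ℕ) (rays : Finset (Fin n → ℤ)) : AddSubmonoid (Fin n → ℤ) where
  carrier := {m | ∀ r ∈ rays, 0 ≤ r ⬝ᵥ m}
  zero_mem' := by
    intro r _
    simp [dotProduct]
  add_mem' := by
    intro a b ha hb r hr
    have := ha r hr
    have := hb r hr
    simp only [dotProduct_add]
    omega

section aux
variable {n : ℕ} {rays : Finset (Fin n → ℤ)} {p e : Fin n → ℤ}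

lemma DemAux.shift_mem (hp : p ∈ rays) (he₁ : p ⬝ᵥ e = -1)
    (he₂ : ∀ q ∈ rays, q ≠ p → 0 ≤ q ⬝ᵥ e)
    {m : Fin n → ℤ} (hm : m ∈ dualConeMonoid n rays) (hpos : 0 < p ⬝ᵥ m) :
    m + e ∈ dualConeMonoid n rays := by
  intro r hr
  rw [dotProduct_add]
  by_cases hrp : r = p
  · subst hrp; omega
  · have := he₂ r hr hrp; have := hm r hr; omega

lemma DemAux.deg_zero (hp : p ∈ rays) (he₁ : p ⬝ᵥ e = -1)
    (he₂ : ∀ q ∈ rays, q ≠ p → 0 ≤ q ⬝ᵥ e)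
    {m : Fin n → ℤ} (hm : m ∈ dualConeMonoid n rays) (hne : m + e ∉ dualConeMonoid n rays) :
    p ⬝ᵥ m = 0 := by
  have h0 : 0 ≤ p ⬝ᵥ m := hm p hp
  by_contra h
  exact hne (DemAux.shift_mem hp he₁ he₂ hm (by omega))
end aux

open scoped Classical in
noncomputable def DemAux.phi (n : ℕ) (rays : Finset (Fin n → ℤ)) (e : Fin n → ℤ) :
    ↥(dualConeMonoid n rays) → ↥(dualConeMonoid n rays) :=
  fun m => if h : ((m : Fin n → ℤ) + e) ∈ dualConeMonoid n rays then ⟨_, h⟩ else m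

noncomputable def DemAux.Lmap (n : ℕ) (rays : Finset (Fin n → ℤ)) (p e : Fin n → ℤ)
    (K : Type*) [Field K] : AddMonoidAlgebra K ↥(dualConeMonoid n rays) →ₗ[K]
    AddMonoidAlgebra K ↥(dualConeMonoid n rays) :=
  (Finsupp.lsum K fun m : ↥(dualConeMonoid n rays) =>
    ((p ⬝ᵥ (m : Fin n → ℤ) : ℤ) : K) • AddMonoidAlgebra.lsingle (R := K) (S := K) (DemAux.phi n rays e m)) ∘ₗ
    (AddMonoidAlgebra.coeffLinearEquiv K).toLinearMap

section main
variable {n : ℕ} {rays : Finset (Fin n → ℤ)} {p e : Fin n → ℤ}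
  {K : Type*} [Field K]

namespace DemAux

lemma Lmap_single (m : ↥(dualConeMonoid n rays)) (a : K) :
    Lmap n rays p e K (AddMonoidAlgebra.single m a) =
      ((p ⬝ᵥ (m : Fin n → ℤ) : ℤ) : K) • AddMonoidAlgebra.single (phi n rays e m) a := by
  show Finsupp.lsum K (fun m : ↥(dualConeMonoid n rays) =>
    ((p ⬝ᵥ (m : Fin n → ℤ) : ℤ) : K) • AddMonoidAlgebra.lsingle (R := K) (S := K) (phi n rays e m))
    (Finsupp.single m a) = _
  rw [Finsupp.lsum_single]
  rfl

lemma phi_eq (m : ↥(dualConeMonoid n rays)) (x : Fin n → ℤ) (hx : x ∈ dualConeMonoid n rays)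
    (hval : (m : Fin n → ℤ) + e = x) : phi n rays e m = ⟨x, hx⟩ := by
  subst hval
  simp [phi, hx]

lemma leibniz_single (hp : p ∈ rays) (he₁ : p ⬝ᵥ e = -1)
    (he₂ : ∀ q ∈ rays, q ≠ p → 0 ≤ q ⬝ᵥ e)
    (m m' : ↥(dualConeMonoid n rays)) (a b : K) :
    Lmap n rays p e K (AddMonoidAlgebra.single m a * AddMonoidAlgebra.single m' b) =
    AddMonoidAlgebra.single m a • Lmap n rays p e K (AddMonoidAlgebra.single m' b) +
    AddMonoidAlgebra.single m' b • Lmap n rays p e K (AddMonoidAlgebra.single m a) := by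
  rw [AddMonoidAlgebra.single_mul_single, Lmap_single, Lmap_single, Lmap_single,
    smul_eq_mul, smul_eq_mul, mul_smul_comm, mul_smul_comm,
    AddMonoidAlgebra.single_mul_single, AddMonoidAlgebra.single_mul_single]
  have hmm' : ((↑(m + m') : Fin n → ℤ)) = (m : Fin n → ℤ) + (m' : Fin n → ℤ) := rfl
  by_cases h : (((m : Fin n → ℤ) + (m' : Fin n → ℤ)) + e) ∈ dualConeMonoid n rays
  · have hT : phi n rays e (m + m') =
        (⟨(m : Fin n → ℤ) + (m' : Fin n → ℤ) + e, h⟩ : ↥(dualConeMonoid n rays)) :=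
      phi_eq _ _ h (by rw [hmm'])
    have hdeg : ((p ⬝ᵥ (↑(m + m') : Fin n → ℤ) : ℤ) : K)
        = ((p ⬝ᵥ (m : Fin n → ℤ) : ℤ) : K) + ((p ⬝ᵥ (m' : Fin n → ℤ) : ℤ) : K) := by
      rw [hmm', dotProduct_add]; push_cast; ring
    rw [hT, hdeg]
    by_cases hm : ((m : Fin n → ℤ) + e) ∈ dualConeMonoid n rays
    · by_cases hm' : ((m' : Fin n → ℤ) + e) ∈ dualConeMonoid n rays
      · rw [phi_eq m _ hm rfl, phi_eq m' _ hm' rfl]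
        have e1 : m + (⟨(m' : Fin n → ℤ) + e, hm'⟩ : ↥(dualConeMonoid n rays)) =
            ⟨(m : Fin n → ℤ) + (m' : Fin n → ℤ) + e, h⟩ := by
          ext1
          show (m : Fin n → ℤ) + ((m' : Fin n → ℤ) + e) = (m : Fin n → ℤ) + (m' : Fin n → ℤ) + e
          ring
        have e2 : m' + (⟨(m : Fin n → ℤ) + e, hm⟩ : ↥(dualConeMonoid n rays)) =
            ⟨(m : Fin n → ℤ) + (m' : Fin n → ℤ) + e, h⟩ := by
          ext1
          show (m' : Fin n → ℤ) + ((m : Fin n → ℤ) + e) = (m : Fin n → ℤ) + (m' : Fin n → ℤ) + e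
          ring
        rw [e1, e2, add_smul, mul_comm b a]
        abel
      · have hz : ((p ⬝ᵥ (m' : Fin n → ℤ) : ℤ) : K) = 0 := by
          rw [deg_zero hp he₁ he₂ m'.2 hm']; simp
        rw [phi_eq m _ hm rfl, hz, zero_smul, zero_add, add_zero]
        have e2 : m' + (⟨(m : Fin n → ℤ) + e, hm⟩ : ↥(dualConeMonoid n rays)) =
            ⟨(m : Fin n → ℤ) + (m' : Fin n → ℤ) + e, h⟩ := by
          ext1
          show (m' : Fin n → ℤ) + ((m : Fin n → ℤ) + e) = (m : Fin n → ℤ) + (m' : Fin n → ℤ) + e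
          ring
        rw [e2, mul_comm b a]
    · have hz : ((p ⬝ᵥ (m : Fin n → ℤ) : ℤ) : K) = 0 := by
        rw [deg_zero hp he₁ he₂ m.2 hm]; simp
      rw [hz, zero_smul, add_zero, zero_add]
      by_cases hm' : ((m' : Fin n → ℤ) + e) ∈ dualConeMonoid n rays
      · rw [phi_eq m' _ hm' rfl]
        have e1 : m + (⟨(m' : Fin n → ℤ) + e, hm'⟩ : ↥(dualConeMonoid n rays)) =
            ⟨(m : Fin n → ℤ) + (m' : Fin n → ℤ) + e, h⟩ := by
          ext1
          show (m : Fin n → ℤ) + ((m' : Fin n → ℤ) + e) = (m : Fin n → ℤ) + (m' : Fin n → ℤ) + e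
          ring
        rw [e1]
      · have hz' : ((p ⬝ᵥ (m' : Fin n → ℤ) : ℤ) : K) = 0 := by
          rw [deg_zero hp he₁ he₂ m'.2 hm']; simp
        rw [hz', zero_smul, zero_smul]
  · have h0 : p ⬝ᵥ ((m : Fin n → ℤ) + (m' : Fin n → ℤ)) = 0 := by
      have hne : ((↑(m + m') : Fin n → ℤ)) + e ∉ dualConeMonoid n rays := by
        rw [hmm']; exact h
      have := deg_zero hp he₁ he₂ (m + m').2 hne
      rwa [hmm'] at this
    have h1 : 0 ≤ p ⬝ᵥ (m : Fin n → ℤ) := m.2 p hp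
    have h2 : 0 ≤ p ⬝ᵥ (m' : Fin n → ℤ) := m'.2 p hp
    rw [dotProduct_add] at h0
    have hm0 : p ⬝ᵥ (m : Fin n → ℤ) = 0 := by omega
    have hm0' : p ⬝ᵥ (m' : Fin n → ℤ) = 0 := by omega
    have ht0 : p ⬝ᵥ ((↑(m + m') : Fin n → ℤ)) = 0 := by rw [hmm', dotProduct_add]; omega
    rw [ht0, hm0, hm0']
    simp

end DemAux
end main

section final
variable {n : ℕ} {rays : Finset (Fin n → ℤ)} {p e : Fin n → ℤ}
  {K : Type*} [Field K]

namespace DemAux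

lemma leibniz_all (hp : p ∈ rays) (he₁ : p ⬝ᵥ e = -1)
    (he₂ : ∀ q ∈ rays, q ≠ p → 0 ≤ q ⬝ᵥ e)
    (f g : AddMonoidAlgebra K ↥(dualConeMonoid n rays)) :
    Lmap n rays p e K (f * g) =
    f • Lmap n rays p e K g + g • Lmap n rays p e K f := by
  induction f using AddMonoidAlgebra.induction_linear with
  | zero => simp
  | add f₁ f₂ h1 h2 =>
    rw [add_mul, map_add, h1, h2, map_add]
    simp only [smul_eq_mul, add_mul, mul_add]
    ring
  | single mf a =>
    induction g using AddMonoidAlgebra.induction_linear with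
    | zero => simp
    | add g₁ g₂ h1 h2 =>
      rw [mul_add, map_add, h1, h2, map_add]
      simp only [smul_eq_mul, add_mul, mul_add]
      ring
    | single mg b => exact leibniz_single hp he₁ he₂ mf mg a b

lemma pow_single (hp : p ∈ rays) (he₁ : p ⬝ᵥ e = -1)
    (he₂ : ∀ q ∈ rays, q ≠ p → 0 ≤ q ⬝ᵥ e) :
    ∀ (N : ℕ) (m : ↥(dualConeMonoid n rays)) (a : K),
      (p ⬝ᵥ (m : Fin n → ℤ)).toNat < N →
      ((Lmap n rays p e K) ^ N) (AddMonoidAlgebra.single m a) = 0 := by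
  intro N
  induction N with
  | zero => intro m a h; omega
  | succ d ih =>
    intro m a h
    rw [pow_succ, Module.End.mul_apply, Lmap_single]
    by_cases h0 : p ⬝ᵥ (m : Fin n → ℤ) = 0
    · rw [h0]
      simp
    · have hpos : 0 < p ⬝ᵥ (m : Fin n → ℤ) := by
        have := m.2 p hp; omega
      have hmem : ((m : Fin n → ℤ) + e) ∈ dualConeMonoid n rays :=
        shift_mem hp he₁ he₂ m.2 hpos
      rw [phi_eq m _ hmem rfl, _root_.map_smul]
      have hdeg : p ⬝ᵥ ((m : Fin n → ℤ) + e) = p ⬝ᵥ (m : Fin n → ℤ) - 1 := by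
        rw [dotProduct_add]; omega
      have hlt : (p ⬝ᵥ ((⟨(m : Fin n → ℤ) + e, hmem⟩ :
          ↥(dualConeMonoid n rays)) : Fin n → ℤ)).toNat < d := by
        show (p ⬝ᵥ ((m : Fin n → ℤ) + e)).toNat < d
        omega
      rw [ih _ a hlt, smul_zero]

end DemAux
end final

/-- Let `σ ⊆ N_ℚ` be a pointed rational polyhedral cone with ray generators `rays`, and
let `e` be a Demazure root with distinguished ray generated by `p`. Then the formula
`∂_e(χ^m) = ⟨p, m⟩ χ^{e+m}` defines a locally nilpotent derivation of the semigroup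
algebra `K[σ^∨ ∩ M]`. -/
theorem demazure_root_gives_lnd (n : ℕ) (rays : Finset (Fin n → ℤ))
    (hpointed : ∀ c : (Fin n → ℤ) → ℕ, ∑ r ∈ rays, c r • r = 0 →
      ∀ r ∈ rays, c r • r = 0)
    (p : Fin n → ℤ) (hp : p ∈ rays) (e : Fin n → ℤ)
    (he₁ : p ⬝ᵥ e = -1) (he₂ : ∀ q ∈ rays, q ≠ p → 0 ≤ q ⬝ᵥ e)
    (K : Type*) [Field K] [CharZero K] :
    ∃ D : Derivation K (AddMonoidAlgebra K ↥(dualConeMonoid n rays))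
        (AddMonoidAlgebra K ↥(dualConeMonoid n rays)),
      (∀ (m : ↥(dualConeMonoid n rays)) (h : (↑m + e) ∈ dualConeMonoid n rays),
        D (AddMonoidAlgebra.single m 1) =
          ((p ⬝ᵥ (↑m : Fin n → ℤ) : ℤ) : K) •
            AddMonoidAlgebra.single (⟨↑m + e, h⟩ : ↥(dualConeMonoid n rays)) 1) ∧
      (∀ m : ↥(dualConeMonoid n rays), (↑m + e) ∉ dualConeMonoid n rays →
        D (AddMonoidAlgebra.single m 1) = 0) ∧
      (∀ f : AddMonoidAlgebra K ↥(dualConeMonoid n rays),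
        ∃ N : ℕ, (D.toLinearMap ^ N) f = 0) := by
  refine ⟨Derivation.mk' (DemAux.Lmap n rays p e K)
      (fun f g => DemAux.leibniz_all hp he₁ he₂ f g), ?_, ?_, ?_⟩
  · intro m h
    rw [Derivation.coe_mk', DemAux.Lmap_single, DemAux.phi_eq m _ h rfl]
  · intro m h
    rw [Derivation.coe_mk', DemAux.Lmap_single,
      DemAux.deg_zero hp he₁ he₂ m.2 h]
    simp
  · have hL : (Derivation.mk' (DemAux.Lmap n rays p e K)
        (fun f g => DemAux.leibniz_all hp he₁ he₂ f g)).toLinearMap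
        = DemAux.Lmap n rays p e K := rfl
    rw [hL]
    intro f
    induction f using AddMonoidAlgebra.induction_linear with
    | zero => exact ⟨0, rfl⟩
    | add f g hf hg =>
      obtain ⟨N1, h1⟩ := hf
      obtain ⟨N2, h2⟩ := hg
      refine ⟨max N1 N2, ?_⟩
      have e1 : ((DemAux.Lmap n rays p e K) ^ max N1 N2) f = 0 := by
        rw [← Nat.sub_add_cancel (le_max_left N1 N2), pow_add, Module.End.mul_apply, h1,
          map_zero]
      have e2 : ((DemAux.Lmap n rays p e K) ^ max N1 N2) g = 0 := by
        rw [← Nat.sub_add_cancel (le_max_right N1 N2), pow_add, Module.End.mul_apply, h2,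
          map_zero]
      rw [map_add, e1, e2, add_zero]
    | single m a =>
      exact ⟨(p ⬝ᵥ (m : Fin n → ℤ)).toNat + 1,
        DemAux.pow_single hp he₁ he₂ _ m a (by omega)⟩
end

section
/- Let A = K[x²,xy,y²,x³,x²y,xy²,y³,z] ⊆ K[x,y,z] with char K = 0. Then the derivations ∂/∂z, y·∂/∂x, and x·∂/∂y of K[x,y,z] restrict to well-defined locally nilpotent derivations of A. -/
open MvPolynomial

set_option synthInstance.maxHeartbeats 1000000
set_option maxHeartbeats 2000000

section Aux

variable {R S : Type*} [CommRing R] [CommRing S] [Algebra R S]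

/-- A derivation mapping generators into the adjoin maps the whole adjoin into itself. -/
theorem aux_deriv_adjoin_mem (d : Derivation R S S) (s : Set S)
    (h : ∀ x ∈ s, d x ∈ Algebra.adjoin R s) :
    ∀ x ∈ Algebra.adjoin R s, d x ∈ Algebra.adjoin R s := by
  intro x hx
  induction hx using Algebra.adjoin_induction with
  | mem x hx => exact h x hx
  | algebraMap r => simp only [Derivation.map_algebraMap]; exact zero_mem _
  | add x y hx hy ihx ihy => rw [map_add]; exact add_mem ihx ihy
  | mul x y hx hy ihx ihy =>
      rw [d.leibniz, smul_eq_mul, smul_eq_mul]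
      exact add_mem (mul_mem hx ihy) (mul_mem hy ihx)

/-- Restrict a derivation of `S` to a subalgebra it preserves. -/
noncomputable def auxRestrict (d : Derivation R S S) (A : Subalgebra R S)
    (h : ∀ x ∈ A, d x ∈ A) : Derivation R A A where
  toLinearMap := LinearMap.codRestrict (Subalgebra.toSubmodule A)
    (d.toLinearMap.comp (Subalgebra.toSubmodule A).subtype) (fun a => h a a.2)
  map_one_eq_zero' := Subtype.ext (by
    show d.toLinearMap ((1 : A) : S) = ((0 : A) : S)
    simp)
  leibniz' a b := Subtype.ext (by
    show d.toLinearMap ((a * b : A) : S) = _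
    rw [Subalgebra.coe_add]
    show _ = (a : S) * d.toLinearMap ((b : A) : S) + (b : S) * d.toLinearMap ((a : A) : S)
    simp only [Derivation.coeFn_coe, MulMemClass.coe_mul, d.leibniz, smul_eq_mul])

@[simp] theorem auxRestrict_coe (d : Derivation R S S) (A : Subalgebra R S)
    (h : ∀ x ∈ A, d x ∈ A) (a : A) : ((auxRestrict d A h a : A) : S) = d a := rfl

theorem auxRestrict_pow_coe (d : Derivation R S S) (A : Subalgebra R S)
    (h : ∀ x ∈ A, d x ∈ A) (m : ℕ) :
    ∀ a : A, ((((auxRestrict d A h).toLinearMap ^ m) a : A) : S) = (d.toLinearMap ^ m) (a : S) := by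
  induction m with
  | zero => intro a; rfl
  | succ n ih =>
      intro a
      rw [pow_succ', pow_succ', Module.End.mul_apply, Module.End.mul_apply]
      have h1 : (((auxRestrict d A h).toLinearMap (((auxRestrict d A h).toLinearMap ^ n) a) : A) : S)
          = d ((((auxRestrict d A h).toLinearMap ^ n) a : A) : S) := rfl
      rw [h1, ih]
      rfl

end Aux

section Deg

variable {K : Type*} [CommRing K] {n : ℕ}

theorem aux_pderiv_zero (i : Fin n) (f : MvPolynomial (Fin n) K)
    (h : degreeOf i f = 0) : pderiv i f = 0 := by
  apply pderiv_eq_zero_of_notMem_vars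
  intro hv
  rw [mem_vars] at hv
  obtain ⟨d, hd, hid⟩ := hv
  have := (degreeOf_le_iff.mp h.le) d hd
  simp [Finsupp.mem_support_iff] at hid
  omega

theorem aux_degreeOf_pderiv (i : Fin n) (f : MvPolynomial (Fin n) K) (m : ℕ)
    (h : degreeOf i f ≤ m + 1) : degreeOf i (pderiv i f) ≤ m := by
  conv_lhs => rw [f.as_sum]
  rw [map_sum]
  refine le_trans (degreeOf_sum_le _ _ _) (Finset.sup_le fun s hs => ?_)
  rw [pderiv_monomial]
  rw [degreeOf_le_iff]
  intro t ht
  have := support_monomial_subset ht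
  rw [Finset.mem_singleton] at this
  subst this
  have hsi : s i ≤ m + 1 := degreeOf_le_iff.mp h s hs
  rw [Finsupp.tsub_apply, Finsupp.single_eq_same]
  omega

/-- Abstract local nilpotence from a degree-decreasing property. -/
theorem aux_ln (i : Fin n) (d : Derivation K (MvPolynomial (Fin n) K) (MvPolynomial (Fin n) K))
    (h0 : ∀ f, degreeOf i f = 0 → d f = 0)
    (h1 : ∀ (m : ℕ) f, degreeOf i f ≤ m + 1 → degreeOf i (d f) ≤ m) :
    ∀ (m : ℕ) (f), degreeOf i f ≤ m → (d.toLinearMap ^ (m + 1)) f = 0 := by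
  intro m
  induction m with
  | zero => intro f hf; simpa using h0 f (le_antisymm hf (Nat.zero_le _))
  | succ k ih =>
      intro f hf
      have : (d.toLinearMap ^ (k + 1 + 1)) f = (d.toLinearMap ^ (k + 1)) (d f) := by
        rw [pow_succ, Module.End.mul_apply]; rfl
      rw [this]
      exact ih (d f) (h1 k f hf)

end Deg

/-- The generating monomials `x², xy, y², x³, x²y, xy², y³, z` inside `K[x,y,z]`. -/
def genMonomials (K : Type*) [CommRing K] : Set (MvPolynomial (Fin 3) K) :=
  {X 0 ^ 2, X 0 * X 1, X 1 ^ 2, X 0 ^ 3, X 0 ^ 2 * X 1, X 0 * X 1 ^ 2, X 1 ^ 3, X 2}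

/-- Let `A = K[x²,xy,y²,x³,x²y,xy²,y³,z] ⊆ K[x,y,z]`, `char K = 0`. The derivations
`∂/∂z`, `y·∂/∂x` and `x·∂/∂y` of `K[x,y,z]` restrict to well-defined locally nilpotent
derivations of `A`. -/
theorem three_lnds_restrict (K : Type*) [Field K] [CharZero K] :
    ∃ (D₁ D₂ D₃ : Derivation K (Algebra.adjoin K (genMonomials K))
        (Algebra.adjoin K (genMonomials K))),
      (∀ f : Algebra.adjoin K (genMonomials K),
        (D₁ f : MvPolynomial (Fin 3) K) = pderiv 2 (f : MvPolynomial (Fin 3) K)) ∧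
      (∀ f : Algebra.adjoin K (genMonomials K),
        (D₂ f : MvPolynomial (Fin 3) K) = X 1 * pderiv 0 (f : MvPolynomial (Fin 3) K)) ∧
      (∀ f : Algebra.adjoin K (genMonomials K),
        (D₃ f : MvPolynomial (Fin 3) K) = X 0 * pderiv 1 (f : MvPolynomial (Fin 3) K)) ∧
      (∀ f, ∃ m : ℕ, (D₁.toLinearMap ^ m) f = 0) ∧
      (∀ f, ∃ m : ℕ, (D₂.toLinearMap ^ m) f = 0) ∧
      (∀ f, ∃ m : ℕ, (D₃.toLinearMap ^ m) f = 0) := by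
  set A := Algebra.adjoin K (genMonomials K) with hA
  -- generator memberships
  have hm : ∀ g ∈ genMonomials K, g ∈ A := fun g hg => Algebra.subset_adjoin hg
  have hx2 : (X 0 ^ 2 : MvPolynomial (Fin 3) K) ∈ A := hm _ (by simp [genMonomials])
  have hxy : (X 0 * X 1 : MvPolynomial (Fin 3) K) ∈ A := hm _ (by simp [genMonomials])
  have hy2 : (X 1 ^ 2 : MvPolynomial (Fin 3) K) ∈ A := hm _ (by simp [genMonomials])
  have hx3 : (X 0 ^ 3 : MvPolynomial (Fin 3) K) ∈ A := hm _ (by simp [genMonomials])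
  have hx2y : (X 0 ^ 2 * X 1 : MvPolynomial (Fin 3) K) ∈ A := hm _ (by simp [genMonomials])
  have hxy2 : (X 0 * X 1 ^ 2 : MvPolynomial (Fin 3) K) ∈ A := hm _ (by simp [genMonomials])
  have hy3 : (X 1 ^ 3 : MvPolynomial (Fin 3) K) ∈ A := hm _ (by simp [genMonomials])
  have hz : (X 2 : MvPolynomial (Fin 3) K) ∈ A := hm _ (by simp [genMonomials])
  set d₁ : Derivation K (MvPolynomial (Fin 3) K) (MvPolynomial (Fin 3) K) := pderiv 2 with hd1
  set d₂ : Derivation K (MvPolynomial (Fin 3) K) (MvPolynomial (Fin 3) K) :=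
    (X 1 : MvPolynomial (Fin 3) K) • pderiv 0 with hd2
  set d₃ : Derivation K (MvPolynomial (Fin 3) K) (MvPolynomial (Fin 3) K) :=
    (X 0 : MvPolynomial (Fin 3) K) • pderiv 1 with hd3
  have hgen1 : ∀ g ∈ genMonomials K, d₁ g ∈ A := by
    intro g hg
    simp only [genMonomials, Set.mem_insert_iff, Set.mem_singleton_iff] at hg
    rcases hg with rfl|rfl|rfl|rfl|rfl|rfl|rfl|rfl <;>
      simp only [hd1, pderiv_pow, pderiv_mul, pderiv_X_self,
        pderiv_X_of_ne (show (0:Fin 3) ≠ 2 by decide),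
        pderiv_X_of_ne (show (1:Fin 3) ≠ 2 by decide), mul_zero, zero_mul, add_zero, zero_add,
        mul_one] <;>
      first
        | exact zero_mem _
        | exact one_mem _
  have hgen2 : ∀ g ∈ genMonomials K, d₂ g ∈ A := by
    intro g hg
    simp only [genMonomials, Set.mem_insert_iff, Set.mem_singleton_iff] at hg
    rcases hg with rfl|rfl|rfl|rfl|rfl|rfl|rfl|rfl <;>
      rw [hd2, Derivation.smul_apply, smul_eq_mul]
    · have : X 1 * (pderiv 0) (X 0 ^ 2 : MvPolynomial (Fin 3) K) = 2 * (X 0 * X 1) := by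
        simp [pderiv_pow]; ring
      rw [this]; exact mul_mem (natCast_mem A 2) hxy
    · have : X 1 * (pderiv 0) (X 0 * X 1 : MvPolynomial (Fin 3) K) = X 1 ^ 2 := by
        simp [pderiv_mul, pderiv_X_of_ne (show (1:Fin 3) ≠ 0 by decide)]; ring
      rw [this]; exact hy2
    · have : X 1 * (pderiv 0) (X 1 ^ 2 : MvPolynomial (Fin 3) K) = 0 := by
        simp [pderiv_pow, pderiv_X_of_ne (show (1:Fin 3) ≠ 0 by decide)]
      rw [this]; exact zero_mem _
    · have : X 1 * (pderiv 0) (X 0 ^ 3 : MvPolynomial (Fin 3) K) = 3 * (X 0 ^ 2 * X 1) := by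
        simp [pderiv_pow]; ring
      rw [this]; exact mul_mem (natCast_mem A 3) hx2y
    · have : X 1 * (pderiv 0) (X 0 ^ 2 * X 1 : MvPolynomial (Fin 3) K) = 2 * (X 0 * X 1 ^ 2) := by
        simp [pderiv_pow, pderiv_mul, pderiv_X_of_ne (show (1:Fin 3) ≠ 0 by decide)]; ring
      rw [this]; exact mul_mem (natCast_mem A 2) hxy2
    · have : X 1 * (pderiv 0) (X 0 * X 1 ^ 2 : MvPolynomial (Fin 3) K) = X 1 ^ 3 := by
        simp [pderiv_pow, pderiv_mul, pderiv_X_of_ne (show (1:Fin 3) ≠ 0 by decide)]; ring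
      rw [this]; exact hy3
    · have : X 1 * (pderiv 0) (X 1 ^ 3 : MvPolynomial (Fin 3) K) = 0 := by
        simp [pderiv_pow, pderiv_X_of_ne (show (1:Fin 3) ≠ 0 by decide)]
      rw [this]; exact zero_mem _
    · have : X 1 * (pderiv 0) (X 2 : MvPolynomial (Fin 3) K) = 0 := by
        simp [pderiv_X_of_ne (show (2:Fin 3) ≠ 0 by decide)]
      rw [this]; exact zero_mem _
  have hgen3 : ∀ g ∈ genMonomials K, d₃ g ∈ A := by
    intro g hg
    simp only [genMonomials, Set.mem_insert_iff, Set.mem_singleton_iff] at hg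
    rcases hg with rfl|rfl|rfl|rfl|rfl|rfl|rfl|rfl <;>
      rw [hd3, Derivation.smul_apply, smul_eq_mul]
    · have : X 0 * (pderiv 1) (X 0 ^ 2 : MvPolynomial (Fin 3) K) = 0 := by
        simp [pderiv_pow, pderiv_X_of_ne (show (0:Fin 3) ≠ 1 by decide)]
      rw [this]; exact zero_mem _
    · have : X 0 * (pderiv 1) (X 0 * X 1 : MvPolynomial (Fin 3) K) = X 0 ^ 2 := by
        simp [pderiv_mul, pderiv_X_of_ne (show (0:Fin 3) ≠ 1 by decide)]; ring
      rw [this]; exact hx2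
    · have : X 0 * (pderiv 1) (X 1 ^ 2 : MvPolynomial (Fin 3) K) = 2 * (X 0 * X 1) := by
        simp [pderiv_pow]; ring
      rw [this]; exact mul_mem (natCast_mem A 2) hxy
    · have : X 0 * (pderiv 1) (X 0 ^ 3 : MvPolynomial (Fin 3) K) = 0 := by
        simp [pderiv_pow, pderiv_X_of_ne (show (0:Fin 3) ≠ 1 by decide)]
      rw [this]; exact zero_mem _
    · have : X 0 * (pderiv 1) (X 0 ^ 2 * X 1 : MvPolynomial (Fin 3) K) = X 0 ^ 3 := by
        simp [pderiv_pow, pderiv_mul, pderiv_X_of_ne (show (0:Fin 3) ≠ 1 by decide)]; ring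
      rw [this]; exact hx3
    · have : X 0 * (pderiv 1) (X 0 * X 1 ^ 2 : MvPolynomial (Fin 3) K) = 2 * (X 0 ^ 2 * X 1) := by
        simp [pderiv_pow, pderiv_mul, pderiv_X_of_ne (show (0:Fin 3) ≠ 1 by decide)]; ring
      rw [this]; exact mul_mem (natCast_mem A 2) hx2y
    · have : X 0 * (pderiv 1) (X 1 ^ 3 : MvPolynomial (Fin 3) K) = 3 * (X 0 * X 1 ^ 2) := by
        simp [pderiv_pow]; ring
      rw [this]; exact mul_mem (natCast_mem A 3) hxy2
    · have : X 0 * (pderiv 1) (X 2 : MvPolynomial (Fin 3) K) = 0 := by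
        simp [pderiv_X_of_ne (show (2:Fin 3) ≠ 1 by decide)]
      rw [this]; exact zero_mem _
  have hA1 := aux_deriv_adjoin_mem d₁ (genMonomials K) hgen1
  have hA2 := aux_deriv_adjoin_mem d₂ (genMonomials K) hgen2
  have hA3 := aux_deriv_adjoin_mem d₃ (genMonomials K) hgen3
  refine ⟨auxRestrict d₁ A hA1, auxRestrict d₂ A hA2, auxRestrict d₃ A hA3,
    fun f => rfl, fun f => ?_, fun f => ?_, fun f => ?_, fun f => ?_, fun f => ?_⟩
  · rw [auxRestrict_coe, hd2, Derivation.smul_apply, smul_eq_mul]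
  · rw [auxRestrict_coe, hd3, Derivation.smul_apply, smul_eq_mul]
  · -- nilpotence of D₁
    refine ⟨degreeOf 2 (f : MvPolynomial (Fin 3) K) + 1, ?_⟩
    have h0 : ∀ g : MvPolynomial (Fin 3) K, degreeOf 2 g = 0 → d₁ g = 0 := fun g hg =>
      aux_pderiv_zero 2 g hg
    have h1 : ∀ (m : ℕ) (g : MvPolynomial (Fin 3) K),
        degreeOf 2 g ≤ m + 1 → degreeOf 2 (d₁ g) ≤ m := fun m g hg =>
      aux_degreeOf_pderiv 2 g m hg
    have := aux_ln 2 d₁ h0 h1 (degreeOf 2 (f : MvPolynomial (Fin 3) K)) f le_rfl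
    have hc := auxRestrict_pow_coe d₁ A hA1 (degreeOf 2 (f : MvPolynomial (Fin 3) K) + 1) f
    rw [this] at hc
    exact Subtype.ext hc
  · -- nilpotence of D₂
    refine ⟨degreeOf 0 (f : MvPolynomial (Fin 3) K) + 1, ?_⟩
    have h0 : ∀ g : MvPolynomial (Fin 3) K, degreeOf 0 g = 0 → d₂ g = 0 := by
      intro g hg
      rw [hd2, Derivation.smul_apply, aux_pderiv_zero 0 g hg, smul_zero]
    have h1 : ∀ (m : ℕ) (g : MvPolynomial (Fin 3) K),
        degreeOf 0 g ≤ m + 1 → degreeOf 0 (d₂ g) ≤ m := by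
      intro m g hg
      rw [hd2, Derivation.smul_apply, smul_eq_mul]
      refine le_trans (degreeOf_mul_le _ _ _) ?_
      have e1 : degreeOf 0 (X 1 : MvPolynomial (Fin 3) K) = 0 := by
        rw [degreeOf_X]; simp
      rw [e1, zero_add]
      exact aux_degreeOf_pderiv 0 g m hg
    have := aux_ln 0 d₂ h0 h1 (degreeOf 0 (f : MvPolynomial (Fin 3) K)) f le_rfl
    have hc := auxRestrict_pow_coe d₂ A hA2 (degreeOf 0 (f : MvPolynomial (Fin 3) K) + 1) f
    rw [this] at hc
    exact Subtype.ext hc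
  · -- nilpotence of D₃
    refine ⟨degreeOf 1 (f : MvPolynomial (Fin 3) K) + 1, ?_⟩
    have h0 : ∀ g : MvPolynomial (Fin 3) K, degreeOf 1 g = 0 → d₃ g = 0 := by
      intro g hg
      rw [hd3, Derivation.smul_apply, aux_pderiv_zero 1 g hg, smul_zero]
    have h1 : ∀ (m : ℕ) (g : MvPolynomial (Fin 3) K),
        degreeOf 1 g ≤ m + 1 → degreeOf 1 (d₃ g) ≤ m := by
      intro m g hg
      rw [hd3, Derivation.smul_apply, smul_eq_mul]
      refine le_trans (degreeOf_mul_le _ _ _) ?_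
      have e1 : degreeOf 1 (X 0 : MvPolynomial (Fin 3) K) = 0 := by
        rw [degreeOf_X]; simp
      rw [e1, zero_add]
      exact aux_degreeOf_pderiv 1 g m hg
    have := aux_ln 1 d₃ h0 h1 (degreeOf 1 (f : MvPolynomial (Fin 3) K)) f le_rfl
    have hc := auxRestrict_pow_coe d₃ A hA3 (degreeOf 1 (f : MvPolynomial (Fin 3) K) + 1) f
    rw [this] at hc
    exact Subtype.ext hc
end

section
/- Let A = K[x²,xy,y²,x³,x²y,xy²,y³,z] ⊆ K[x,y,z], char K = 0, and let ∂₁ = ∂/∂z, ∂₂ = y·∂/∂x, ∂₃ = x·∂/∂y restricted to A. Then (Ker ∂₁) ∩ (Ker ∂₂) ∩ (Ker ∂₃) = K. Consequently the Makar-Limanov invariant ML(A) (intersection of kernels of all locally nilpotent derivations of A) equals K. -/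
open MvPolynomial

set_option synthInstance.maxHeartbeats 1000000
set_option maxHeartbeats 2000000

/-- The algebra `A = K[x²,xy,y²,x³,x²y,xy²,y³,z] ⊆ K[x,y,z]`. -/
noncomputable def AA (K : Type*) [CommRing K] : Subalgebra K (MvPolynomial (Fin 3) K) :=
  Algebra.adjoin K (genMonomials K)

section Aux

variable {K : Type*} [CommRing K] {σ : Type*} [DecidableEq σ]

lemma coeff_pderiv' (i : σ) (m : σ →₀ ℕ) (f : MvPolynomial σ K) :
    coeff m (pderiv i f) = (m i + 1) * coeff (m + Finsupp.single i 1) f := by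
  induction f using MvPolynomial.induction_on' with
  | monomial s a =>
    rw [pderiv_monomial]
    classical
    by_cases h : s = m + Finsupp.single i 1
    · subst h
      simp [coeff_monomial, Finsupp.single_le_iff, mul_comm]
    · rw [coeff_monomial, coeff_monomial, if_neg h, mul_zero]
      by_cases h2 : s - Finsupp.single i 1 = m
      · rw [if_pos h2]
        by_cases h3 : s i = 0
        · simp [h3]
        · exfalso
          apply h
          rw [← h2]
          ext j
          by_cases hj : j = i
          · subst hj
            simp [Finsupp.single_apply]
            omega
          · simp [Finsupp.single_apply, hj, Ne.symm hj]
      · rw [if_neg h2]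
  | add p q hp hq => simp [map_add, hp, hq, mul_add]

lemma degreeOf_pderiv_le' {i : σ} {f : MvPolynomial σ K} {d : ℕ}
    (h : degreeOf i f ≤ d + 1) : degreeOf i (pderiv i f) ≤ d := by
  rw [degreeOf_le_iff] at h ⊢
  intro m hm
  rw [mem_support_iff, coeff_pderiv'] at hm
  have h2 : coeff (m + Finsupp.single i 1) f ≠ 0 := by
    intro hz; rw [hz, mul_zero] at hm; exact hm rfl
  have := h _ (mem_support_iff.mpr h2)
  simp [Finsupp.add_apply, Finsupp.single_apply] at this
  omega

lemma pderiv_eq_zero_of_degreeOf_zero' {i : σ} {f : MvPolynomial σ K}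
    (h : degreeOf i f = 0) : pderiv i f = 0 := by
  ext m
  rw [coeff_pderiv', coeff_zero]
  have : coeff (m + Finsupp.single i 1) f = 0 := by
    by_contra hc
    have := degreeOf_le_iff.mp h.le _ (mem_support_iff.mpr hc)
    simp [Finsupp.add_apply, Finsupp.single_apply] at this
  rw [this, mul_zero]

lemma iterate_mul_pderiv_eq_zero' {i : σ} (c : MvPolynomial σ K)
    (hc : degreeOf i c = 0) :
    ∀ n (p : MvPolynomial σ K), degreeOf i p ≤ n →
      (fun q => c * pderiv i q)^[n + 1] p = 0 := by
  intro n
  induction n with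
  | zero =>
    intro p hp
    show c * pderiv i p = 0
    rw [pderiv_eq_zero_of_degreeOf_zero' (Nat.le_zero.mp hp), mul_zero]
  | succ n ih =>
    intro p hp
    rw [Function.iterate_succ_apply]
    apply ih
    calc degreeOf i (c * pderiv i p) ≤ degreeOf i c + degreeOf i (pderiv i p) :=
          degreeOf_mul_le i c (pderiv i p)
      _ ≤ 0 + n := add_le_add hc.le (degreeOf_pderiv_le' hp)
      _ = n := zero_add n

end Aux

lemma exists_C_of_pderiv_eq_zero' {K σ : Type*} [DecidableEq σ] [Field K] [CharZero K]
    (f : MvPolynomial σ K) (h : ∀ i, pderiv i f = 0) : ∃ c : K, f = C c := by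
  refine ⟨coeff 0 f, MvPolynomial.ext _ _ fun m => ?_⟩
  rw [coeff_C]
  by_cases hm : (0 : σ →₀ ℕ) = m
  · rw [if_pos hm, ← hm]
  · rw [if_neg hm]
    obtain ⟨i, hi⟩ : ∃ i, m i ≠ 0 := by
      by_contra hc
      push_neg at hc
      exact hm (Finsupp.ext fun j => by simp [hc j])
    have hmm : (m - Finsupp.single i 1) + Finsupp.single i 1 = m := by
      ext j
      by_cases hj : j = i
      · subst hj; simp [Finsupp.single_apply]; omega
      · simp [Finsupp.single_apply, hj, Ne.symm hj]
    have h0 : coeff (m - Finsupp.single i 1) (pderiv i f) = 0 := by rw [h i, coeff_zero]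
    rw [coeff_pderiv', hmm] at h0
    rcases mul_eq_zero.mp h0 with h0 | h0
    · exact absurd h0 (Nat.cast_add_one_ne_zero _)
    · exact h0

/-- Iterates of a derivation on a subalgebra correspond to iterates of the ambient map. -/
lemma derivation_iterate_coe {K : Type*} [Field K]
    (D : Derivation K ↥(AA K) ↥(AA K)) (F : MvPolynomial (Fin 3) K → MvPolynomial (Fin 3) K)
    (hD : ∀ f : ↥(AA K), (D f : MvPolynomial (Fin 3) K) = F (f : MvPolynomial (Fin 3) K)) :
    ∀ (m : ℕ) (g : ↥(AA K)),
      (((D.toLinearMap ^ m) g : ↥(AA K)) : MvPolynomial (Fin 3) K) =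
        F^[m] (g : MvPolynomial (Fin 3) K) := by
  intro m
  induction m with
  | zero => intro g; rfl
  | succ m ih =>
    intro g
    rw [pow_succ, Module.End.mul_apply, Function.iterate_succ_apply]
    rw [ih (D.toLinearMap g)]
    congr 1
    exact hD g

/-- Let `A = K[x²,xy,y²,x³,x²y,xy²,y³,z]`, `char K = 0`, and let `∂₁ = ∂/∂z`,
`∂₂ = y∂/∂x`, `∂₃ = x∂/∂y` restricted to `A`. Then `Ker ∂₁ ∩ Ker ∂₂ ∩ Ker ∂₃ = K`;
consequently the Makar-Limanov invariant `ML(A)`, the intersection of the kernels of all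
locally nilpotent derivations of `A`, equals `K`. -/
theorem ML_of_A_trivial (K : Type*) [Field K] [CharZero K]
    (D₁ D₂ D₃ : Derivation K ↥(AA K) ↥(AA K))
    (h₁ : ∀ f : ↥(AA K),
      (D₁ f : MvPolynomial (Fin 3) K) = pderiv 2 (f : MvPolynomial (Fin 3) K))
    (h₂ : ∀ f : ↥(AA K),
      (D₂ f : MvPolynomial (Fin 3) K) = X 1 * pderiv 0 (f : MvPolynomial (Fin 3) K))
    (h₃ : ∀ f : ↥(AA K),
      (D₃ f : MvPolynomial (Fin 3) K) = X 0 * pderiv 1 (f : MvPolynomial (Fin 3) K)) :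
    (∀ f : ↥(AA K), D₁ f = 0 → D₂ f = 0 → D₃ f = 0 →
      ∃ c : K, f = algebraMap K ↥(AA K) c) ∧
    (∀ f : ↥(AA K),
      (∀ D : Derivation K ↥(AA K) ↥(AA K),
        (∀ g, ∃ m : ℕ, (D.toLinearMap ^ m) g = 0) → D f = 0) →
      ∃ c : K, f = algebraMap K ↥(AA K) c) := by
  have first : ∀ f : ↥(AA K), D₁ f = 0 → D₂ f = 0 → D₃ f = 0 →
      ∃ c : K, f = algebraMap K ↥(AA K) c := by
    intro f k1 k2 k3
    have p2 : pderiv 2 (f : MvPolynomial (Fin 3) K) = 0 := by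
      rw [← h₁ f, k1]; rfl
    have p0 : pderiv 0 (f : MvPolynomial (Fin 3) K) = 0 := by
      have : X 1 * pderiv 0 (f : MvPolynomial (Fin 3) K) = 0 := by
        rw [← h₂ f, k2]; rfl
      rcases mul_eq_zero.mp this with h | h
      · exact absurd h (X_ne_zero 1)
      · exact h
    have p1 : pderiv 1 (f : MvPolynomial (Fin 3) K) = 0 := by
      have : X 0 * pderiv 1 (f : MvPolynomial (Fin 3) K) = 0 := by
        rw [← h₃ f, k3]; rfl
      rcases mul_eq_zero.mp this with h | h
      · exact absurd h (X_ne_zero 0)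
      · exact h
    obtain ⟨c, hc⟩ := exists_C_of_pderiv_eq_zero' (f : MvPolynomial (Fin 3) K)
      (fun i => by fin_cases i <;> assumption)
    refine ⟨c, Subtype.ext ?_⟩
    rw [hc]
    simp [MvPolynomial.algebraMap_eq]
  have lnd : ∀ (D : Derivation K ↥(AA K) ↥(AA K)) (c : MvPolynomial (Fin 3) K) (i : Fin 3),
      degreeOf i c = 0 →
      (∀ f : ↥(AA K), (D f : MvPolynomial (Fin 3) K) =
        c * pderiv i (f : MvPolynomial (Fin 3) K)) →
      ∀ g, ∃ m : ℕ, (D.toLinearMap ^ m) g = 0 := by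
    intro D c i hc hD g
    refine ⟨degreeOf i (g : MvPolynomial (Fin 3) K) + 1, ?_⟩
    have := derivation_iterate_coe D (fun q => c * pderiv i q) hD
      (degreeOf i (g : MvPolynomial (Fin 3) K) + 1) g
    rw [iterate_mul_pderiv_eq_zero' c hc _ _ le_rfl] at this
    exact Subtype.ext this
  refine ⟨first, fun f hf => ?_⟩
  refine first f
    (hf D₁ (lnd D₁ 1 2 (by rw [← C_1]; exact degreeOf_C 1 2) (fun f => by rw [h₁ f, one_mul])))
    (hf D₂ (lnd D₂ (X 1) 0 (by simp [degreeOf_X]) h₂))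
    (hf D₃ (lnd D₃ (X 0) 1 (by simp [degreeOf_X]) h₃))
end

section
/- Let A = K[x²,xy,y²,x³,x²y,xy²,y³,z] ⊆ K[x,y,z], char K = 0. Then the Derksen invariant HD(A), the subalgebra of A generated by the kernels of all nonzero locally nilpotent derivations of A, equals A. More precisely, A is generated by Ker(∂/∂z) and Ker(y·∂/∂x). -/
open MvPolynomial

set_option synthInstance.maxHeartbeats 1000000
set_option maxHeartbeats 2000000

lemma my_coeff_pderiv {σ K : Type*} [CommSemiring K] (i : σ) (p : MvPolynomial σ K)
    (m : σ →₀ ℕ) :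
    coeff m (pderiv i p) = ((m i + 1 : ℕ) : K) * coeff (m + Finsupp.single i 1) p := by
  classical
  induction p using MvPolynomial.induction_on' with
  | monomial s a =>
    rw [pderiv_monomial, coeff_monomial, coeff_monomial]
    by_cases h : s = m + Finsupp.single i 1
    · subst h
      rw [if_pos (add_tsub_cancel_right _ _), if_pos rfl]
      simp [mul_comm]
    · rw [if_neg h]
      by_cases hs : s i = 0
      · split <;> simp [hs]
      · rw [if_neg]
        · ring
        · intro hc
          apply h
          rw [← hc, tsub_add_cancel_of_le]
          intro j
          rcases eq_or_ne j i with rfl | hj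
          · simpa [Finsupp.single_apply] using Nat.one_le_iff_ne_zero.mpr hs
          · simp [Finsupp.single_apply, hj.symm]
  | add p q ihp ihq =>
    simp [ihp, ihq, mul_add]

lemma supp_pderiv {σ K : Type*} [Field K] [CharZero K] (i : σ) (p : MvPolynomial σ K)
    (m : σ →₀ ℕ) (hm : m ∈ (pderiv i p).support) : m i + 1 ≤ degreeOf i p := by
  rw [mem_support_iff, my_coeff_pderiv] at hm
  have hc : coeff (m + Finsupp.single i 1) p ≠ 0 := by
    intro h; exact hm (by simp [h])
  have := monomial_le_degreeOf i (mem_support_iff.2 hc)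
  simpa [Finsupp.single_apply] using this

lemma deg_pderiv_lt {σ K : Type*} [Field K] [CharZero K] (i : σ) (p : MvPolynomial σ K)
    (h : pderiv i p ≠ 0) : degreeOf i (pderiv i p) < degreeOf i p := by
  have h0 : 0 < degreeOf i p := by
    obtain ⟨m, hm⟩ := support_nonempty.mpr h
    exact lt_of_lt_of_le (Nat.succ_pos _) (supp_pderiv i p m hm)
  rw [degreeOf_lt_iff h0]
  intro m hm
  exact lt_of_lt_of_le (Nat.lt_succ_self _) (supp_pderiv i p m hm)

lemma iter_zero {σ K : Type*} [Field K] [CharZero K] (i : σ) (q : MvPolynomial σ K)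
    (hq : degreeOf i q = 0) :
    ∀ n (p : MvPolynomial σ K), degreeOf i p < n →
      (fun r => q * pderiv i r)^[n] p = 0 := by
  intro n
  induction n with
  | zero => intro p hp; omega
  | succ n ih =>
    intro p hp
    rw [Function.iterate_succ_apply]
    by_cases h : pderiv i p = 0
    · simp only [h, mul_zero]
      exact Function.iterate_fixed (by simp) n
    · apply ih
      calc degreeOf i (q * pderiv i p) ≤ degreeOf i q + degreeOf i (pderiv i p) :=
            degreeOf_mul_le i q (pderiv i p)
        _ < degreeOf i p := by rw [hq]; simpa using deg_pderiv_lt i p h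
        _ ≤ n := Nat.lt_succ_iff.mp hp

/-- If a derivation of `AA K` is given on coordinates by `q * pderiv i` with
`degreeOf i q = 0`, then it is locally nilpotent. -/
lemma lnd_of_form {K : Type*} [Field K] [CharZero K]
    (D : Derivation K ↥(AA K) ↥(AA K)) (i : Fin 3) (q : MvPolynomial (Fin 3) K)
    (hq : degreeOf i q = 0)
    (hD : ∀ f : ↥(AA K), (D f : MvPolynomial (Fin 3) K) = q * pderiv i (f : MvPolynomial (Fin 3) K)) :
    ∀ g, ∃ m : ℕ, (D.toLinearMap ^ m) g = 0 := by
  have link : ∀ (n : ℕ) (g : ↥(AA K)),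
      ((D.toLinearMap ^ n) g : MvPolynomial (Fin 3) K) =
        (fun r => q * pderiv i r)^[n] (g : MvPolynomial (Fin 3) K) := by
    intro n
    induction n with
    | zero => intro g; simp
    | succ n ih =>
      intro g
      rw [pow_succ, Function.iterate_succ_apply]
      have : (D.toLinearMap ^ n * D.toLinearMap) g = (D.toLinearMap ^ n) (D g) := rfl
      rw [this, ih (D g), hD g]
  intro g
  refine ⟨degreeOf i (g : MvPolynomial (Fin 3) K) + 1, ?_⟩
  have := link (degreeOf i (g : MvPolynomial (Fin 3) K) + 1) g
  rw [iter_zero i q hq _ _ (Nat.lt_succ_self _)] at this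
  exact Subtype.ext this

/-- Let `A = K[x²,xy,y²,x³,x²y,xy²,y³,z]`, `char K = 0`. The Derksen invariant `HD(A)`,
the subalgebra of `A` generated by the kernels of all nonzero locally nilpotent
derivations of `A`, equals `A`; more precisely, `A` is generated by `Ker(∂/∂z)` and
`Ker(y∂/∂x)`. -/
theorem HD_of_A_is_A (K : Type*) [Field K] [CharZero K]
    (D₁ D₂ : Derivation K ↥(AA K) ↥(AA K))
    (h₁ : ∀ f : ↥(AA K),
      (D₁ f : MvPolynomial (Fin 3) K) = pderiv 2 (f : MvPolynomial (Fin 3) K))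
    (h₂ : ∀ f : ↥(AA K),
      (D₂ f : MvPolynomial (Fin 3) K) = X 1 * pderiv 0 (f : MvPolynomial (Fin 3) K)) :
    Algebra.adjoin K ({f : ↥(AA K) | D₁ f = 0} ∪ {f : ↥(AA K) | D₂ f = 0}) = ⊤ ∧
    Algebra.adjoin K
      (⋃ D ∈ {D : Derivation K ↥(AA K) ↥(AA K) |
          (∀ g, ∃ m : ℕ, (D.toLinearMap ^ m) g = 0) ∧ D ≠ 0},
        {f : ↥(AA K) | D f = 0}) = ⊤ := by
  have e0 : pderiv (2 : Fin 3) (X 0 : MvPolynomial (Fin 3) K) = 0 :=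
    pderiv_X_of_ne (by decide)
  have e1 : pderiv (2 : Fin 3) (X 1 : MvPolynomial (Fin 3) K) = 0 :=
    pderiv_X_of_ne (by decide)
  have e2 : pderiv (0 : Fin 3) (X 2 : MvPolynomial (Fin 3) K) = 0 :=
    pderiv_X_of_ne (by decide)
  -- generators lie in the kernels
  have hsub1 : ((↑) : ↥(AA K) → MvPolynomial (Fin 3) K) ⁻¹' genMonomials K ⊆
      {f : ↥(AA K) | D₁ f = 0} ∪ {f : ↥(AA K) | D₂ f = 0} := by
    rintro f hf
    simp only [Set.mem_preimage, genMonomials, Set.mem_insert_iff, Set.mem_singleton_iff] at hf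
    rcases hf with h | h | h | h | h | h | h | h
    all_goals first
      | (right
         refine Subtype.ext ?_
         rw [ZeroMemClass.coe_zero, h₂, h, e2, mul_zero])
      | (left
         refine Subtype.ext ?_
         rw [ZeroMemClass.coe_zero, h₁, h]
         simp [pderiv_mul, pderiv_pow, e0, e1])
  -- D₁ and D₂ are nonzero locally nilpotent derivations
  have hz : (X 2 : MvPolynomial (Fin 3) K) ∈ AA K :=
    Algebra.subset_adjoin (by simp [genMonomials])
  have hx2 : ((X 0 : MvPolynomial (Fin 3) K) ^ 2) ∈ AA K :=
    Algebra.subset_adjoin (by simp [genMonomials])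
  have hD₁lnd : ∀ g, ∃ m : ℕ, (D₁.toLinearMap ^ m) g = 0 := by
    apply lnd_of_form D₁ 2 1 (by rw [← C_1]; exact degreeOf_C 1 2)
    intro f; rw [h₁, one_mul]
  have hD₂lnd : ∀ g, ∃ m : ℕ, (D₂.toLinearMap ^ m) g = 0 := by
    apply lnd_of_form D₂ 0 (X 1) (by rw [degreeOf_X, if_neg (by decide : ¬(0:Fin 3) = 1)])
    exact h₂
  have hD₁ne : D₁ ≠ 0 := by
    intro h
    have := h₁ ⟨X 2, hz⟩
    rw [h] at this
    simp only [Derivation.zero_apply, ZeroMemClass.coe_zero] at this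
    rw [pderiv_X_self] at this
    exact one_ne_zero this.symm
  have hD₂ne : D₂ ≠ 0 := by
    intro h
    have := h₂ ⟨X 0 ^ 2, hx2⟩
    rw [h] at this
    simp only [Derivation.zero_apply, ZeroMemClass.coe_zero] at this
    rw [pderiv_pow, pderiv_X_self] at this
    have hne : (X 1 : MvPolynomial (Fin 3) K) * (((2 : ℕ) : MvPolynomial (Fin 3) K) * X 0 ^ (2 - 1) * 1) ≠ 0 := by
      refine mul_ne_zero (X_ne_zero 1) (mul_ne_zero (mul_ne_zero ?_ (pow_ne_zero _ (X_ne_zero 0))) one_ne_zero)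
      exact_mod_cast (by norm_num : ((2 : ℕ) : MvPolynomial (Fin 3) K) ≠ 0)
    exact hne this.symm
  -- adjoin of preimage of generators is top
  have htop : Algebra.adjoin K
      (((↑) : ↥(AA K) → MvPolynomial (Fin 3) K) ⁻¹' genMonomials K) = ⊤ :=
    Algebra.adjoin_adjoin_coe_preimage
  constructor
  · rw [eq_top_iff, ← htop]
    exact Algebra.adjoin_mono hsub1
  · rw [eq_top_iff, ← htop]
    apply Algebra.adjoin_mono
    intro f hf
    rcases hsub1 hf with h | h
    · exact Set.mem_biUnion (Set.mem_setOf.2 ⟨hD₁lnd, hD₁ne⟩) h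
    · exact Set.mem_biUnion (Set.mem_setOf.2 ⟨hD₂lnd, hD₂ne⟩) h
end
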